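/- If y ∈ ℝ^n is very well multiplicatively approximable, then there exists γ > 0 such that there are infinitely many t ∈ ℤ₊ⁿ with δ(g_t Λ_y) ≤ e^{-γ·(t₁+⋯+tₙ)}. -/

import Mathlib

open MeasureTheory

/-- `δ(Λ) = inf_{v ∈ Λ, v ≠ 0} ‖v‖_∞` (the sup-norm is the norm of the pi type). -/
noncomputable def latDelta {k : ℕ} (Lam : Set (Fin k → ℝ)) : ℝ :=
  ⨅ v : {v : Fin k → ℝ // v ∈ Lam ∧ v ≠ 0}, ‖v.1‖

/-- The lattice `Λ_y ⊂ ℝ^{n+1}` of vectors `(q·y + p, q₁, …, qₙ)`, `p ∈ ℤ`, `q ∈ ℤⁿ`. -/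
def lat {n : ℕ} (y : Fin n → ℝ) : Set (Fin (n + 1) → ℝ) :=
  {v | ∃ (p : ℤ) (q : Fin n → ℤ),
    v = Fin.cons ((∑ i, (q i : ℝ) * y i) + (p : ℝ)) (fun i => (q i : ℝ))}

/-- The action of `g_t = diag(e^t, e^{-t₁}, …, e^{-tₙ})` on `ℝ^{n+1}`, where `t = Σᵢ tᵢ`. -/
noncomputable def gAct {n : ℕ} (t : Fin n → ℝ) (v : Fin (n + 1) → ℝ) : Fin (n + 1) → ℝ :=
  Fin.cons (Real.exp (∑ i, t i) * v 0) (fun i => Real.exp (-t i) * v i.succ)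

/-- `y ∈ ℝⁿ` is very well multiplicatively approximable: for some `ε > 0` there are
infinitely many `q ∈ ℤⁿ` with `|q·y + p| · Π₊(q) ≤ Π₊(q)^{-ε}` for some `p ∈ ℤ`. -/
def VWMA {n : ℕ} (y : Fin n → ℝ) : Prop :=
  ∃ ε : ℝ, 0 < ε ∧
    {q : Fin n → ℤ | ∃ p : ℤ,
      |(∑ i, (q i : ℝ) * y i) + (p : ℝ)| * (∏ i, max |(q i : ℝ)| 1) ≤
        (∏ i, max |(q i : ℝ)| 1) ^ (-ε)}.Infinite

-- auxiliary definitions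
noncomputable def mQ {n : ℕ} (q : Fin n → ℤ) (i : Fin n) : ℝ := max |(q i : ℝ)| 1

noncomputable def PQ {n : ℕ} (q : Fin n → ℤ) : ℝ := ∏ i, mQ q i

noncomputable def LQ {n : ℕ} (q : Fin n → ℤ) : ℝ := Real.log (PQ q)

noncomputable def PhiQ {n : ℕ} (c : ℝ) (q : Fin n → ℤ) (i : Fin n) : ℕ :=
  ⌈Real.log (mQ q i) + c * LQ q⌉₊

lemma mQ_one_le {n : ℕ} (q : Fin n → ℤ) (i : Fin n) : (1 : ℝ) ≤ mQ q i := le_max_right _ _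

lemma mQ_pos {n : ℕ} (q : Fin n → ℤ) (i : Fin n) : (0 : ℝ) < mQ q i :=
  lt_of_lt_of_le one_pos (mQ_one_le q i)

lemma prod_one_le {n : ℕ} (f : Fin n → ℝ) (hf : ∀ i, 1 ≤ f i) (s : Finset (Fin n)) :
    (1 : ℝ) ≤ ∏ i ∈ s, f i :=
  calc (1 : ℝ) = ∏ _i ∈ s, (1 : ℝ) := (Finset.prod_const_one).symm
    _ ≤ ∏ i ∈ s, f i := Finset.prod_le_prod (fun _ _ => zero_le_one) (fun i _ => hf i)

lemma PQ_one_le {n : ℕ} (q : Fin n → ℤ) : (1 : ℝ) ≤ PQ q := by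
  unfold PQ
  exact prod_one_le _ (mQ_one_le q) _

lemma PQ_pos {n : ℕ} (q : Fin n → ℤ) : (0 : ℝ) < PQ q :=
  lt_of_lt_of_le one_pos (PQ_one_le q)

lemma LQ_nonneg {n : ℕ} (q : Fin n → ℤ) : 0 ≤ LQ q := Real.log_nonneg (PQ_one_le q)

lemma mQ_le_PQ {n : ℕ} (q : Fin n → ℤ) (i : Fin n) : mQ q i ≤ PQ q := by
  unfold PQ
  rw [← Finset.mul_prod_erase Finset.univ (mQ q) (Finset.mem_univ i)]
  exact le_mul_of_one_le_right (mQ_pos q i).le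
    (prod_one_le _ (mQ_one_le q) _)

lemma log_mQ_nonneg {n : ℕ} (q : Fin n → ℤ) (i : Fin n) : 0 ≤ Real.log (mQ q i) :=
  Real.log_nonneg (mQ_one_le q i)

lemma log_mQ_le {n : ℕ} (q : Fin n → ℤ) (i : Fin n) : Real.log (mQ q i) ≤ LQ q :=
  Real.log_le_log (mQ_pos q i) (mQ_le_PQ q i)

lemma sum_log_mQ {n : ℕ} (q : Fin n → ℤ) : ∑ i, Real.log (mQ q i) = LQ q :=
  (Real.log_prod (fun i _ => ne_of_gt (mQ_pos q i))).symm

lemma PhiQ_ge {n : ℕ} (c : ℝ) (q : Fin n → ℤ) (i : Fin n) :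
    Real.log (mQ q i) + c * LQ q ≤ (PhiQ c q i : ℝ) := Nat.le_ceil _

lemma PhiQ_lt {n : ℕ} {c : ℝ} (hc : 0 ≤ c) (q : Fin n → ℤ) (i : Fin n) :
    (PhiQ c q i : ℝ) < Real.log (mQ q i) + c * LQ q + 1 :=
  Nat.ceil_lt_add_one (add_nonneg (log_mQ_nonneg q i) (mul_nonneg hc (LQ_nonneg q)))

lemma finite_of_bounded {n : ℕ} (B : Fin n → ℝ) :
    {q : Fin n → ℤ | ∀ i, |(q i : ℝ)| ≤ B i}.Finite := by
  apply Set.Finite.subset (Set.finite_Icc (fun i => -⌈B i⌉) fun i => ⌈B i⌉)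
  intro q hq
  rw [Set.mem_Icc]
  refine ⟨fun i => ?_, fun i => ?_⟩
  · have : ((-⌈B i⌉ : ℤ) : ℝ) ≤ (q i : ℝ) := by
      push_cast
      linarith [Int.le_ceil (B i), (abs_le.1 (hq i)).1]
    exact_mod_cast this
  · have : ((q i : ℝ)) ≤ ((⌈B i⌉ : ℤ) : ℝ) := le_trans (abs_le.1 (hq i)).2 (Int.le_ceil _)
    exact_mod_cast this

lemma latDelta_le {k : ℕ} {Lam : Set (Fin k → ℝ)} {w : Fin k → ℝ}
    (h1 : w ∈ Lam) (h2 : w ≠ 0) : latDelta Lam ≤ ‖w‖ :=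
  ciInf_le ⟨0, by rintro x ⟨u, rfl⟩; exact norm_nonneg _⟩
    (⟨w, h1, h2⟩ : {v : Fin k → ℝ // v ∈ Lam ∧ v ≠ 0})

lemma gAct_norm_le {n : ℕ} (t : Fin n → ℝ) (v : Fin (n + 1) → ℝ) (r : ℝ) (hr : 0 ≤ r)
    (h0 : |Real.exp (∑ i, t i) * v 0| ≤ r)
    (hs : ∀ i : Fin n, |Real.exp (-t i) * v i.succ| ≤ r) : ‖gAct t v‖ ≤ r := by
  apply (pi_norm_le_iff_of_nonneg hr).2
  intro i
  rw [Real.norm_eq_abs]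
  refine Fin.cases ?_ ?_ i
  · simpa [gAct] using h0
  · intro j
    simpa [gAct] using hs j

/-- Corollary 2.2: if `y` is VWMA then for some `γ > 0` there are infinitely
many `t ∈ ℤ₊ⁿ` with `δ(g_t Λ_y) ≤ e^{-γ(t₁+⋯+tₙ)}`. -/
theorem stmt5 {n : ℕ} (y : Fin n → ℝ) (h : VWMA y) :
    ∃ γ : ℝ, 0 < γ ∧
      {t : Fin n → ℕ |
        latDelta (gAct (fun i => (t i : ℝ)) '' lat y) ≤
          Real.exp (-γ * ∑ i, (t i : ℝ))}.Infinite := by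
  obtain ⟨ε, hε, hinf⟩ := h
  rcases Nat.eq_zero_or_pos n with hn0 | hn
  · subst hn0
    exact absurd hinf (Set.not_infinite.2 (Set.toFinite _))
  have hnR : (0:ℝ) < n := by exact_mod_cast hn
  set c : ℝ := ε / (2 * n) with hc
  have hc0 : 0 < c := by positivity
  have hnc : (n : ℝ) * c = ε / 2 := by
    rw [hc, mul_div_assoc', div_eq_div_iff (by positivity) (by norm_num)]; ring
  set R : ℝ := max (n : ℝ) (4 * n / ε) with hR
  set γ : ℝ := min c (ε / 4) / (2 + ε) with hγ
  have h2ε : (0:ℝ) < 2 + ε := by linarith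
  have hγ0 : 0 < γ := div_pos (lt_min hc0 (by linarith)) h2ε
  have hγm : γ * (2 + ε) = min c (ε / 4) := by
    rw [hγ, div_mul_eq_mul_div, mul_div_assoc, div_self h2ε.ne', mul_one]
  -- fibers of PhiQ c are finite
  have hfiber : ∀ t : Fin n → ℕ, {q : Fin n → ℤ | PhiQ c q = t}.Finite := by
    intro t
    apply Set.Finite.subset (finite_of_bounded (fun i => Real.exp (t i)))
    intro q hq i
    have h1 : Real.log (mQ q i) ≤ (t i : ℝ) := by
      have h2 := PhiQ_ge c q i
      rw [hq] at h2
      have h3 : 0 ≤ c * LQ q := mul_nonneg hc0.le (LQ_nonneg q)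
      linarith
    calc |(q i : ℝ)| ≤ mQ q i := le_max_left _ _
      _ = Real.exp (Real.log (mQ q i)) := (Real.exp_log (mQ_pos q i)).symm
      _ ≤ Real.exp (t i) := Real.exp_le_exp.2 h1
  -- restrict to large q
  set S' : Set (Fin n → ℤ) :=
    {q : Fin n → ℤ | ∃ p : ℤ,
      |(∑ i, (q i : ℝ) * y i) + (p : ℝ)| * (∏ i, max |(q i : ℝ)| 1) ≤
        (∏ i, max |(q i : ℝ)| 1) ^ (-ε)} \ {q | LQ q < R} with hS'
  have hsmall : {q : Fin n → ℤ | LQ q < R}.Finite := by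
    apply Set.Finite.subset (finite_of_bounded (fun _ => Real.exp R))
    intro q hq i
    calc |(q i : ℝ)| ≤ mQ q i := le_max_left _ _
      _ = Real.exp (Real.log (mQ q i)) := (Real.exp_log (mQ_pos q i)).symm
      _ ≤ Real.exp R := Real.exp_le_exp.2 (le_of_lt (lt_of_le_of_lt (log_mQ_le q i) hq))
  have hS'inf : S'.Infinite := hinf.diff hsmall
  -- main estimate
  have hmain : ∀ q ∈ S', PhiQ c q ∈ {t : Fin n → ℕ |
      latDelta (gAct (fun i => (t i : ℝ)) '' lat y) ≤
        Real.exp (-γ * ∑ i, (t i : ℝ))} := by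
    rintro q ⟨⟨p, hp⟩, hbig⟩
    simp only [Set.mem_setOf_eq, not_lt] at hbig
    have hLR : R ≤ LQ q := hbig
    have hLn : (n : ℝ) ≤ LQ q := le_trans (le_max_left _ _) hLR
    have hLε : 4 * (n:ℝ) / ε ≤ LQ q := le_trans (le_max_right _ _) hLR
    have hLε' : 4 * (n:ℝ) ≤ ε * LQ q := by
      rw [div_le_iff₀ hε] at hLε; linarith
    have hL0 : 0 ≤ LQ q := LQ_nonneg q
    -- bounds on T := ∑ (PhiQ c q i : ℝ)
    have hT0 : (0:ℝ) ≤ ∑ i, (PhiQ c q i : ℝ) :=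
      Finset.sum_nonneg fun i _ => Nat.cast_nonneg _
    have hTub : ∑ i, (PhiQ c q i : ℝ) ≤ (1 + ε / 2) * LQ q + n := by
      have h1 : ∑ i, (PhiQ c q i : ℝ) ≤ ∑ i : Fin n, (Real.log (mQ q i) + c * LQ q + 1) :=
        Finset.sum_le_sum fun i _ => (PhiQ_lt hc0.le q i).le
      have h2 : ∑ i : Fin n, (Real.log (mQ q i) + c * LQ q + 1)
          = LQ q + (n : ℝ) * (c * LQ q) + n := by
        rw [Finset.sum_add_distrib, Finset.sum_add_distrib, sum_log_mQ q,
          Finset.sum_const, Finset.sum_const, Finset.card_univ, Fintype.card_fin,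
          nsmul_eq_mul, nsmul_eq_mul]
        ring
      rw [h2] at h1
      have h3 : (n:ℝ) * (c * LQ q) = (ε / 2) * LQ q := by rw [← mul_assoc, hnc]
      linarith
    have hT2ε : ∑ i, (PhiQ c q i : ℝ) ≤ (2 + ε) * LQ q := by
      have h3 : 0 ≤ (ε / 2) * LQ q := mul_nonneg (by linarith) hL0
      nlinarith
    have hγT : γ * ∑ i, (PhiQ c q i : ℝ) ≤ min c (ε / 4) * LQ q := by
      calc γ * ∑ i, (PhiQ c q i : ℝ) ≤ γ * ((2 + ε) * LQ q) :=
            mul_le_mul_of_nonneg_left hT2ε hγ0.le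
        _ = γ * (2 + ε) * LQ q := by ring
        _ = min c (ε / 4) * LQ q := by rw [hγm]
    -- the lattice vector
    have hvmem : (Fin.cons ((∑ i, (q i : ℝ) * y i) + (p : ℝ)) (fun i => (q i : ℝ)) :
        Fin (n+1) → ℝ) ∈ lat y := ⟨p, q, rfl⟩
    -- q ≠ 0
    have hq0 : ∃ i, q i ≠ 0 := by
      by_contra h0
      push_neg at h0
      have hP1 : PQ q = 1 := Finset.prod_eq_one fun i _ => by simp [mQ, h0 i]
      have hL1 : LQ q = 0 := by rw [LQ, hP1, Real.log_one]
      rw [hL1] at hLR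
      have h1n : (1:ℝ) ≤ n := by exact_mod_cast hn
      have : (0:ℝ) < R := lt_of_lt_of_le (by linarith) (le_max_left _ _)
      linarith
    obtain ⟨i₀, hi₀⟩ := hq0
    set w : Fin (n+1) → ℝ := gAct (fun i => (PhiQ c q i : ℝ))
      (Fin.cons ((∑ i, (q i : ℝ) * y i) + (p : ℝ)) (fun i => (q i : ℝ))) with hw
    have hw0 : w ≠ 0 := by
      intro h0
      have h1 := congrFun h0 i₀.succ
      rw [hw] at h1
      simp only [gAct, Fin.cons_succ, Pi.zero_apply] at h1
      rcases mul_eq_zero.1 h1 with h2 | h2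
      · exact (Real.exp_pos _).ne' h2
      · exact hi₀ (by exact_mod_cast h2)
    have hdelta : latDelta (gAct (fun i => ((PhiQ c q i : ℕ) : ℝ)) '' lat y) ≤ ‖w‖ :=
      latDelta_le ⟨_, hvmem, rfl⟩ hw0
    simp only [Set.mem_setOf_eq]
    refine le_trans hdelta ?_
    rw [hw]
    apply gAct_norm_le _ _ _ (Real.exp_pos _).le
    · -- first coordinate
      rw [Fin.cons_zero, abs_mul, Real.abs_exp]
      have hPexp : PQ q = Real.exp (LQ q) := (Real.exp_log (PQ_pos q)).symm
      have hpow : PQ q ^ (-ε) = Real.exp (-ε * LQ q) := by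
        rw [Real.rpow_def_of_pos (PQ_pos q)]
        rw [show Real.log (PQ q) = LQ q from rfl]
        ring_nf
      have hale : |(∑ i, (q i : ℝ) * y i) + (p : ℝ)| ≤ Real.exp (-(1 + ε) * LQ q) := by
        have h1 : |(∑ i, (q i : ℝ) * y i) + (p : ℝ)| * PQ q ≤ Real.exp (-ε * LQ q) := by
          rw [← hpow]; exact hp
        have h2 : |(∑ i, (q i : ℝ) * y i) + (p : ℝ)| ≤
            Real.exp (-ε * LQ q) / Real.exp (LQ q) := by
          rw [le_div_iff₀ (Real.exp_pos _), ← hPexp]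
          exact h1
        refine le_trans h2 (le_of_eq ?_)
        rw [← Real.exp_sub]; ring_nf
      calc Real.exp (∑ i, (PhiQ c q i : ℝ)) * |(∑ i, (q i : ℝ) * y i) + (p : ℝ)|
          ≤ Real.exp (∑ i, (PhiQ c q i : ℝ)) * Real.exp (-(1 + ε) * LQ q) :=
            mul_le_mul_of_nonneg_left hale (Real.exp_pos _).le
        _ = Real.exp ((∑ i, (PhiQ c q i : ℝ)) + -(1 + ε) * LQ q) := (Real.exp_add _ _).symm
        _ ≤ Real.exp (-γ * ∑ i, (PhiQ c q i : ℝ)) := by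
            apply Real.exp_le_exp.2
            have hmin : min c (ε / 4) * LQ q ≤ (ε / 4) * LQ q :=
              mul_le_mul_of_nonneg_right (min_le_right _ _) hL0
            linarith
    · -- other coordinates
      intro j
      rw [Fin.cons_succ, abs_mul, Real.abs_exp]
      have h1 : |(q j : ℝ)| ≤ mQ q j := le_max_left _ _
      have h2 : Real.exp (-(PhiQ c q j : ℝ)) * |(q j : ℝ)| ≤ Real.exp (-c * LQ q) := by
        calc Real.exp (-(PhiQ c q j : ℝ)) * |(q j : ℝ)|
            ≤ Real.exp (-(PhiQ c q j : ℝ)) * mQ q j :=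
              mul_le_mul_of_nonneg_left h1 (Real.exp_pos _).le
          _ = Real.exp (-(PhiQ c q j : ℝ)) * Real.exp (Real.log (mQ q j)) := by
              rw [Real.exp_log (mQ_pos q j)]
          _ = Real.exp (-(PhiQ c q j : ℝ) + Real.log (mQ q j)) := (Real.exp_add _ _).symm
          _ ≤ Real.exp (-c * LQ q) := by
              apply Real.exp_le_exp.2
              have h3 := PhiQ_ge c q j
              linarith
      refine le_trans h2 (Real.exp_le_exp.2 ?_)
      have hmin : min c (ε / 4) * LQ q ≤ c * LQ q :=
        mul_le_mul_of_nonneg_right (min_le_left _ _) hL0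
      linarith
  -- wrap up
  refine ⟨γ, hγ0, ?_⟩
  have himg : (PhiQ c '' S').Infinite := by
    intro hfin
    apply hS'inf
    apply Set.Finite.subset (hfin.biUnion (fun t _ => hfiber t))
    intro q hq
    exact Set.mem_biUnion (Set.mem_image_of_mem _ hq) rfl
  have hsub : PhiQ c '' S' ⊆ {t : Fin n → ℕ |
      latDelta (gAct (fun i => (t i : ℝ)) '' lat y) ≤
        Real.exp (-γ * ∑ i, (t i : ℝ))} := by
    rintro t ⟨q, hq, rfl⟩
    exact hmain q hq
  exact himg.mono hsub
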